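/- arXiv:1907.05875 — 3 statements merged into one kernel-verified Lean document; each statement's English description precedes it below -/
import Mathlib

section
/- For every n ∈ ℕ and every p > 0 there exist constants C, K > 0 with the following property: for every Lebesgue-measurable set S ⊆ [0,1]^n of Lebesgue measure greater than p, every d ∈ ℕ, and every homogeneous polynomial h of degree d in n variables with complex coefficients satisfying |h(x)| ≤ 1 for all x ∈ S, one has |h(z)| ≤ K C^d ‖z‖_∞^d for all z ∈ ℂ^n, where ‖z‖_∞ = max_i |z_i|. -/
open MeasureTheory

section PascoeAux

open Finset Nat Polynomial MeasureTheory


-- factorial products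
lemma prodrange (j : ℕ) : ∏ k ∈ range j, (j - k) = j ! := by
  rw [← Finset.prod_range_reflect]
  rw [← Finset.prod_range_add_one_eq_factorial]
  apply Finset.prod_congr rfl
  intro k hk; rw [Finset.mem_range] at hk; omega

lemma prodIco (d j : ℕ) (h : j ≤ d) : ∏ k ∈ Finset.Ico (j+1) (d+1), (k - j) = (d - j)! := by
  rw [Finset.prod_Ico_eq_prod_range]
  rw [← Finset.prod_range_add_one_eq_factorial]
  have : d + 1 - (j+1) = d - j := by omega
  rw [this]
  apply Finset.prod_congr rfl
  intro k hk; omega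

lemma erase_split (d j : ℕ) (h : j ≤ d) :
    (Finset.range (d+1)).erase j = Finset.range j ∪ Finset.Ico (j+1) (d+1) := by
  ext k
  simp only [Finset.mem_erase, Finset.mem_range, Finset.mem_union, Finset.mem_Ico]
  omega

lemma prod_abs_factorial (d j : ℕ) (h : j ≤ d) :
    ∏ k ∈ (Finset.range (d+1)).erase j, |(j:ℝ) - (k:ℝ)| = (j ! : ℝ) * ((d - j)! : ℝ) := by
  rw [erase_split d j h, Finset.prod_union (by
    simp only [Finset.disjoint_left, Finset.mem_range, Finset.mem_Ico]; omega)]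
  have h1 : ∏ k ∈ Finset.range j, |(j:ℝ) - (k:ℝ)| = (j ! : ℝ) := by
    rw [← prodrange j]
    push_cast
    apply Finset.prod_congr rfl
    intro k hk; rw [Finset.mem_range] at hk
    rw [Nat.cast_sub hk.le, abs_of_nonneg] ; ring_nf
    have : (k:ℝ) ≤ j := by exact_mod_cast hk.le
    linarith
  have h2 : ∏ k ∈ Finset.Ico (j+1) (d+1), |(j:ℝ) - (k:ℝ)| = ((d - j)! : ℝ) := by
    rw [← prodIco d j h]
    push_cast
    apply Finset.prod_congr rfl
    intro k hk; rw [Finset.mem_Ico] at hk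
    have hjk : j ≤ k := by omega
    rw [Nat.cast_sub hjk, abs_sub_comm, abs_of_nonneg]
    have : (j:ℝ) ≤ k := by exact_mod_cast hjk
    linarith
  rw [h1, h2]




lemma prod_fin_erase (d : ℕ) (j : Fin (d+1)) (F : ℕ → ℝ) :
    ∏ k ∈ Finset.univ.erase j, F (k : ℕ) = ∏ k ∈ (Finset.range (d+1)).erase (j:ℕ), F k := by
  apply Finset.prod_nbij' (i := fun (k : Fin (d+1)) => (k : ℕ))
    (j := fun (k : ℕ) => if hk : k < d + 1 then (⟨k, hk⟩ : Fin (d+1)) else j)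
  · intro a ha
    simp only [Finset.mem_erase, Finset.mem_univ, and_true] at ha
    simp only [Finset.mem_erase, Finset.mem_range]
    exact ⟨fun hc => ha (Fin.ext hc), a.isLt⟩
  · intro a ha
    simp only [Finset.mem_erase, Finset.mem_range] at ha
    simp only [Finset.mem_erase, Finset.mem_univ, and_true, ha.2, dif_pos]
    intro hc
    exact ha.1 (by simpa using congrArg Fin.val hc)
  · intro a ha; simp [a.isLt]
  · intro a ha
    simp only [Finset.mem_erase, Finset.mem_range] at ha
    simp [ha.2]
  · intro a ha; rfl

lemma lagrange_norm_bound (d : ℕ) (c : ℝ) (hc : 0 < c) (t : Fin (d+1) → ℝ)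
    (hsep : ∀ j k : Fin (d+1), (j:ℕ) < (k:ℕ) → c * (((k:ℕ) : ℝ) - ((j:ℕ) : ℝ)) ≤ t k - t j)
    (ht : ∀ j, t j ∈ Set.Icc (0:ℝ) 1)
    (q : Polynomial ℂ) (hq : q.natDegree ≤ d)
    (M : ℝ) (hM : 0 ≤ M) (hval : ∀ j, ‖q.eval ((t j : ℝ) : ℂ)‖ ≤ M)
    (w : ℂ) (hw : ‖w‖ ≤ 1) :
    ‖q.eval w‖ ≤ M * 4 ^ d / (c ^ d * d !) := by
  classical
  set v : Fin (d+1) → ℂ := fun j => ((t j : ℝ) : ℂ) with hv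
  -- separation facts
  have tsep : ∀ j k : Fin (d+1), j ≠ k → c * |((j:ℕ) : ℝ) - ((k:ℕ) : ℝ)| ≤ |t j - t k| := by
    intro j k hjk
    rcases lt_or_gt_of_ne (fun hc' => hjk (Fin.ext hc')) with hlt | hlt
    · rw [abs_of_nonpos (by push_cast; simp; omega), abs_sub_comm,
        abs_of_nonneg (by nlinarith [hsep j k hlt, hc.le, (by exact_mod_cast hlt : ((j:ℕ):ℝ) < ((k:ℕ):ℝ))])]
      have := hsep j k hlt
      linarith
    · rw [abs_of_nonneg (by push_cast; simp; omega),
        abs_of_nonneg (by nlinarith [hsep k j hlt, hc.le, (by exact_mod_cast hlt : ((k:ℕ):ℝ) < ((j:ℕ):ℝ))])]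
      have := hsep k j hlt
      linarith
  have tinj : Function.Injective t := by
    intro j k hjk
    by_contra hne
    have h1 := tsep j k hne
    rw [hjk, sub_self, abs_zero] at h1
    have h2 : (1:ℝ) ≤ |((j:ℕ) : ℝ) - ((k:ℕ) : ℝ)| := by
      have : (j:ℕ) ≠ (k:ℕ) := fun hc' => hne (Fin.ext hc')
      have : 1 ≤ Int.natAbs ((j:ℕ) - (k:ℕ) : ℤ) := by omega
      calc (1:ℝ) ≤ (Int.natAbs ((j:ℕ) - (k:ℕ) : ℤ) : ℝ) := by exact_mod_cast this
        _ = |((j:ℕ) : ℝ) - ((k:ℕ) : ℝ)| := by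
            rw [Nat.cast_natAbs]
            push_cast
            rfl
    nlinarith
  have vinj : Set.InjOn v ↑(Finset.univ : Finset (Fin (d+1))) := by
    intro a _ b _ hab
    exact tinj (Complex.ofReal_inj.mp hab)
  have hdeg : q.degree < (Finset.univ : Finset (Fin (d+1))).card := by
    rw [Finset.card_univ, Fintype.card_fin]
    calc q.degree ≤ q.natDegree := Polynomial.degree_le_natDegree
      _ < ((d+1 : ℕ) : WithBot ℕ) := by exact_mod_cast Nat.lt_succ_of_le hq
  have hrepr := Lagrange.eq_interpolate (v := v) vinj hdeg
  -- bound each basis polynomial evaluation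
  have hbasis : ∀ j : Fin (d+1),
      ‖(Lagrange.basis Finset.univ v j).eval w‖ ≤ 2^d / (c^d * (((j:ℕ)! : ℝ) * ((d - (j:ℕ))! : ℝ))) := by
    intro j
    rw [Lagrange.basis, Polynomial.eval_prod]
    rw [norm_prod]
    have hle : ∀ k ∈ Finset.univ.erase j,
        ‖(Lagrange.basisDivisor (v j) (v k)).eval w‖ ≤ 2 / (c * |((j:ℕ):ℝ) - ((k:ℕ):ℝ)|) := by
      intro k hk
      have hkj : k ≠ j := (Finset.mem_erase.mp hk).1
      rw [Lagrange.basisDivisor]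
      rw [Polynomial.eval_mul, Polynomial.eval_C, Polynomial.eval_sub, Polynomial.eval_X,
        Polynomial.eval_C, norm_mul, norm_inv]
      have hvjk : ‖v j - v k‖ = |t j - t k| := by
        rw [hv]; rw [← Complex.ofReal_sub, Complex.norm_real]; rfl
      have h1 : ‖w - v k‖ ≤ 2 := by
        calc ‖w - v k‖ ≤ ‖w‖ + ‖v k‖ := norm_sub_le _ _
          _ ≤ 1 + 1 := by
              apply add_le_add hw
              rw [hv]; simp only [Complex.norm_real]
              rw [Real.norm_eq_abs, abs_le]
              have := ht k; exact ⟨by linarith [this.1], this.2⟩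
          _ = 2 := by norm_num
      have h2 : c * |((j:ℕ):ℝ) - ((k:ℕ):ℝ)| ≤ ‖v j - v k‖ := by
        rw [hvjk]; exact tsep j k hkj.symm
      have hpos : 0 < c * |((j:ℕ):ℝ) - ((k:ℕ):ℝ)| := by
        apply mul_pos hc
        rw [abs_pos, sub_ne_zero]
        intro hcontra
        exact hkj (Fin.ext (by exact_mod_cast hcontra.symm))
      rw [mul_comm, ← div_eq_mul_inv]
      exact div_le_div₀ (by norm_num) h1 hpos h2
    calc ∏ k ∈ Finset.univ.erase j, ‖(Lagrange.basisDivisor (v j) (v k)).eval w‖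
        ≤ ∏ k ∈ Finset.univ.erase j, (2 / (c * |((j:ℕ):ℝ) - ((k:ℕ):ℝ)|)) := by
          apply Finset.prod_le_prod (fun k _ => norm_nonneg _) hle
      _ = 2^d / (c^d * (((j:ℕ)! : ℝ) * ((d - (j:ℕ))! : ℝ))) := by
          rw [Finset.prod_div_distrib, Finset.prod_const]
          have hcard : (Finset.univ.erase j).card = d := by
            rw [Finset.card_erase_of_mem (Finset.mem_univ _), Finset.card_univ, Fintype.card_fin]
            omega
          rw [hcard]
          congr 1
          rw [Finset.prod_mul_distrib, Finset.prod_const, hcard]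
          congr 1
          rw [prod_fin_erase d j (fun k => |((j:ℕ):ℝ) - (k:ℝ)|)]
          exact prod_abs_factorial d (j:ℕ) (by omega)
  have key : ∑ j ∈ Finset.range (d+1), (1:ℝ)/((j ! : ℝ) * ((d-j)! : ℝ)) = 2^d / (d ! : ℝ) := by
    have hc2 : ∀ j ∈ Finset.range (d+1), (1:ℝ)/((j ! : ℝ) * ((d-j)! : ℝ)) = (d.choose j : ℝ) / (d ! : ℝ) := by
      intro j hj
      rw [Finset.mem_range] at hj
      have hjd : j ≤ d := by omega
      have := Nat.choose_mul_factorial_mul_factorial hjd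
      have hcast : (d.choose j : ℝ) * (j ! : ℝ) * ((d-j)! : ℝ) = (d ! : ℝ) := by exact_mod_cast congrArg (Nat.cast : ℕ → ℝ) this
      have h1 : (0:ℝ) < (j ! : ℝ) := by exact_mod_cast Nat.factorial_pos j
      have h2 : (0:ℝ) < ((d-j)! : ℝ) := by exact_mod_cast Nat.factorial_pos (d-j)
      have h3 : (0:ℝ) < (d ! : ℝ) := by exact_mod_cast Nat.factorial_pos d
      field_simp
      linarith [hcast]
    rw [Finset.sum_congr rfl hc2, ← Finset.sum_div]
    congr 1
    rw [← Nat.cast_sum]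
    rw [Nat.sum_range_choose]
    push_cast
    ring
  have hq0 : (0:ℝ) < c^d * (d ! : ℝ) := by positivity
  calc ‖q.eval w‖ = ‖(Lagrange.interpolate Finset.univ v fun i => q.eval (v i)).eval w‖ := by
        rw [← hrepr]
    _ ≤ ∑ j : Fin (d+1), ‖q.eval (v j)‖ * ‖(Lagrange.basis Finset.univ v j).eval w‖ := by
        rw [Lagrange.interpolate_apply, Polynomial.eval_finset_sum]
        refine (norm_sum_le _ _).trans ?_
        apply Finset.sum_le_sum
        intro j _
        rw [Polynomial.eval_mul, Polynomial.eval_C, norm_mul]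
    _ ≤ ∑ j : Fin (d+1), M * (2^d / (c^d * (((j:ℕ)! : ℝ) * ((d - (j:ℕ))! : ℝ)))) := by
        apply Finset.sum_le_sum
        intro j _
        exact mul_le_mul (hval j) (hbasis j) (norm_nonneg _) hM
    _ = M * (2^d/c^d) * ∑ j : Fin (d+1), (1:ℝ)/((((j:ℕ)! : ℝ) * ((d - (j:ℕ))! : ℝ))) := by
        rw [Finset.mul_sum]
        apply Finset.sum_congr rfl
        intro j _
        have h1 : (0:ℝ) < ((j:ℕ)! : ℝ) := by exact_mod_cast Nat.factorial_pos _
        have h2 : (0:ℝ) < ((d - (j:ℕ))! : ℝ) := by exact_mod_cast Nat.factorial_pos _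
        field_simp
    _ = M * (2^d/c^d) * (2^d / (d ! : ℝ)) := by
        rw [Fin.sum_univ_eq_sum_range (fun j => (1:ℝ)/(((j)! : ℝ) * ((d - j)! : ℝ))), key]
    _ = M * 4^d / (c^d * (d ! : ℝ)) := by
        have h3 : (0:ℝ) < (d ! : ℝ) := by exact_mod_cast Nat.factorial_pos d
        have h4 : (0:ℝ) < c^d := by positivity
        have h5 : (4:ℝ)^d = 2^d * 2^d := by rw [← mul_pow]; norm_num
        rw [h5]
        field_simp




lemma remez (p : ℝ) (hp : 0 < p) (E : Set ℝ) (hE : E ⊆ Set.Icc 0 1)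
    (hvol : ENNReal.ofReal p ≤ volume E) (d : ℕ) (q : Polynomial ℂ) (hq : q.natDegree ≤ d)
    (M : ℝ) (hM : 0 ≤ M) (hbd : ∀ x ∈ E, ‖q.eval ((x:ℝ) : ℂ)‖ ≤ M) :
    ∀ w : ℂ, ‖w‖ ≤ 1 → ‖q.eval w‖ ≤ M * Real.exp 1 * (4 * Real.exp 1 / p) ^ d := by
  intro w hw
  set F : ℝ → ℝ := fun x => (volume (E ∩ Set.Iic x)).toReal with hF
  have hfin : ∀ x : ℝ, volume (E ∩ Set.Iic x) ≠ ⊤ := by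
    intro x
    have h1 : volume (E ∩ Set.Iic x) ≤ volume (Set.Icc (0:ℝ) 1) :=
      measure_mono (fun y hy => hE hy.1)
    rw [Real.volume_Icc] at h1
    exact ne_top_of_le_ne_top (by simp) h1
  have hLip : ∀ x y : ℝ, x ≤ y → F y ≤ F x + (y - x) := by
    intro x y hxy
    have hsub : E ∩ Set.Iic y ⊆ (E ∩ Set.Iic x) ∪ Set.Ioc x y := by
      rintro z ⟨hz, hz2⟩
      rcases le_or_gt z x with h | h
      · exact Or.inl ⟨hz, h⟩
      · exact Or.inr ⟨h, hz2⟩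
    have h1 : volume (E ∩ Set.Iic y) ≤ volume (E ∩ Set.Iic x) + volume (Set.Ioc x y) :=
      (measure_mono hsub).trans (measure_union_le _ _)
    rw [Real.volume_Ioc] at h1
    calc F y ≤ ((volume (E ∩ Set.Iic x)) + ENNReal.ofReal (y - x)).toReal := by
          apply ENNReal.toReal_mono _ h1
          exact ENNReal.add_ne_top.mpr ⟨hfin x, by simp⟩
      _ = F x + (y - x) := by
          rw [ENNReal.toReal_add (hfin x) (by simp), ENNReal.toReal_ofReal (by linarith)]
  have hMono : Monotone F := by
    intro x y hxy
    apply ENNReal.toReal_mono (hfin y)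
    exact measure_mono (Set.inter_subset_inter_right _ (Set.Iic_subset_Iic.mpr hxy))
  have hcont : Continuous F := by
    have : LipschitzWith 1 F := by
      apply LipschitzWith.of_dist_le_mul
      intro x y
      rw [Real.dist_eq, Real.dist_eq, NNReal.coe_one, one_mul]
      rcases le_total x y with h | h
      · rw [abs_sub_comm, abs_of_nonneg (by linarith [hMono h]), abs_of_nonpos (by linarith)]
        linarith [hLip x y h]
      · rw [abs_of_nonneg (by linarith [hMono h]), abs_of_nonneg (by linarith)]
        linarith [hLip y x h]
    exact this.continuous
  have hF0 : ∀ x : ℝ, x ≤ 0 → F x ≤ 0 := by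
    intro x hx
    have : volume (E ∩ Set.Iic x) ≤ volume (Set.Icc (0:ℝ) x) := by
      apply measure_mono
      rintro y ⟨hy, hy2⟩
      exact ⟨(hE hy).1, hy2⟩
    rw [Real.volume_Icc] at this
    have : volume (E ∩ Set.Iic x) = 0 := le_antisymm (by
      rw [ENNReal.ofReal_eq_zero.mpr (by linarith)] at this; exact this) (_root_.zero_le)
    simp [hF, this]
  have hF1 : p ≤ F 1 := by
    have h1 : ENNReal.ofReal p ≤ volume (E ∩ Set.Iic 1) := by
      refine hvol.trans (le_of_eq ?_)
      congr 1
      exact (Set.inter_eq_left.mpr (fun y hy => (hE hy).2)).symm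
    calc p = (ENNReal.ofReal p).toReal := by rw [ENNReal.toReal_ofReal hp.le]
      _ ≤ F 1 := ENNReal.toReal_mono (hfin 1) h1
  set c : ℝ := p / (d + 1) with hcdef
  have hc : 0 < c := by positivity
  set A : Fin (d+1) → Set ℝ := fun j => {x | x ∈ Set.Icc (0:ℝ) 1 ∧ ((j:ℕ) + 1) * c ≤ F x} with hA
  have hAne : ∀ j, (A j).Nonempty := by
    intro j
    refine ⟨1, ⟨by norm_num, by norm_num⟩, ?_⟩
    have h0 : ((j:ℕ):ℝ) ≤ (d:ℝ) := by exact_mod_cast Nat.lt_succ_iff.mp j.isLt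
    have h1 : ((j:ℕ) + 1 : ℝ) ≤ ((d:ℝ) + 1) := by linarith
    have h2 : ((d:ℝ)+1) * c = p := by rw [hcdef]; field_simp
    nlinarith
  have hAclosed : ∀ j, IsClosed (A j) := by
    intro j
    have : A j = Set.Icc (0:ℝ) 1 ∩ {x | ((j:ℕ) + 1) * c ≤ F x} := rfl
    rw [this]
    exact isClosed_Icc.inter (isClosed_le continuous_const hcont)
  have hAbdd : ∀ j, BddBelow (A j) := fun j => ⟨0, fun x hx => hx.1.1⟩
  set t : Fin (d+1) → ℝ := fun j => sInf (A j) with htdef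
  have htmem : ∀ j, t j ∈ A j := fun j => (hAclosed j).csInf_mem (hAne j) (hAbdd j)
  have htIcc : ∀ j, t j ∈ Set.Icc (0:ℝ) 1 := fun j => (htmem j).1
  have htF : ∀ j : Fin (d+1), ((j:ℕ) + 1) * c ≤ F (t j) := fun j => (htmem j).2
  have hmin : ∀ (j : Fin (d+1)) (x : ℝ), x < t j → F x < ((j:ℕ) + 1) * c := by
    intro j x hx
    rcases lt_or_ge x 0 with h | h
    · calc F x ≤ 0 := hF0 x h.le
        _ < ((j:ℕ) + 1) * c := by positivity
    · by_contra hcon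
      push_neg at hcon
      have hx1 : x ≤ 1 := le_trans hx.le (htIcc j).2
      have : x ∈ A j := ⟨⟨h, hx1⟩, hcon⟩
      have h5 : t j ≤ x := csInf_le (hAbdd j) this
      linarith
  have hFle : ∀ j, F (t j) ≤ ((j:ℕ) + 1) * c := by
    intro j
    by_contra hcon
    push_neg at hcon
    have ht0 : 0 < t j := by
      rcases (htIcc j).1.lt_or_eq with h | h
      · exact h
      · exfalso
        have : F (t j) ≤ 0 := by rw [← h]; exact hF0 0 le_rfl
        nlinarith [htF j]
    have hcontAt := hcont.continuousAt (x := t j)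
    rw [Metric.continuousAt_iff] at hcontAt
    obtain ⟨δ, hδ, hδ2⟩ := hcontAt (F (t j) - ((j:ℕ) + 1) * c) (by linarith)
    set y := t j - min (δ/2) (t j / 2) with hy
    have hmin' : 0 < min (δ/2) (t j / 2) := lt_min (by linarith) (by linarith)
    have hylt : y < t j := by rw [hy]; linarith
    have hdist : dist y (t j) < δ := by
      rw [Real.dist_eq, hy]
      have habs : |t j - min (δ/2) (t j/2) - t j| = min (δ/2) (t j/2) := by
        rw [show t j - min (δ/2) (t j/2) - t j = -(min (δ/2) (t j/2)) by ring, abs_neg,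
          abs_of_pos hmin']
      rw [habs]
      calc min (δ/2) (t j/2) ≤ δ/2 := min_le_left _ _
        _ < δ := by linarith
    have := hδ2 hdist
    rw [Real.dist_eq, abs_lt] at this
    have hFy := hmin j y hylt
    linarith
  have hsep : ∀ j k : Fin (d+1), (j:ℕ) < (k:ℕ) → c * (((k:ℕ):ℝ) - ((j:ℕ):ℝ)) ≤ t k - t j := by
    intro j k hjk
    have h1 : t j ≤ t k := by
      by_contra hcon
      push_neg at hcon
      have := hmin j (t k) hcon
      have h2 := htF k
      have : ((k:ℕ) + 1 : ℝ) * c ≤ ((j:ℕ) + 1) * c := by linarith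
      have hjk' : ((j:ℕ):ℝ) < ((k:ℕ):ℝ) := by exact_mod_cast hjk
      nlinarith
    have h2 := hLip (t j) (t k) h1
    have h3 := htF k
    have h4 := hFle j
    have : F (t k) - F (t j) ≥ (((k:ℕ):ℝ) - ((j:ℕ):ℝ)) * c := by
      have hjk' : ((j:ℕ):ℝ) ≤ ((k:ℕ):ℝ) := by exact_mod_cast hjk.le
      nlinarith
    nlinarith
  have htE : ∀ j, ‖q.eval ((t j : ℝ) : ℂ)‖ ≤ M := by
    intro j
    have hclosure : t j ∈ closure E := by
      rw [Metric.mem_closure_iff]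
      intro ε hε
      have hFlow : F (t j - ε) < ((j:ℕ) + 1) * c := hmin j _ (by linarith)
      have hsplit : volume (E ∩ Set.Iic (t j)) ≤
          volume (E ∩ Set.Iic (t j - ε)) + volume (E ∩ Set.Ioc (t j - ε) (t j)) := by
        refine (measure_mono ?_).trans (measure_union_le _ _)
        rintro z ⟨hz, hz2⟩
        rcases le_or_gt z (t j - ε) with h | h
        · exact Or.inl ⟨hz, h⟩
        · exact Or.inr ⟨hz, h, hz2⟩
      have hpos : 0 < volume (E ∩ Set.Ioc (t j - ε) (t j)) := by
        by_contra hcon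
        push_neg at hcon
        have h0 : volume (E ∩ Set.Ioc (t j - ε) (t j)) = 0 := le_antisymm (by exact le_of_not_gt (by simpa using hcon)) (_root_.zero_le)
        rw [h0, add_zero] at hsplit
        have : F (t j) ≤ F (t j - ε) := ENNReal.toReal_mono (hfin _) hsplit
        have := htF j
        linarith
      have hne : (E ∩ Set.Ioc (t j - ε) (t j)).Nonempty := by
        rw [Set.nonempty_iff_ne_empty]
        intro hcon
        rw [hcon] at hpos
        simp at hpos
      obtain ⟨y, hyE, hy1, hy2⟩ := hne
      refine ⟨y, hyE, ?_⟩
      rw [Real.dist_eq, abs_lt]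
      constructor <;> linarith
    have hclosed : IsClosed {x : ℝ | ‖q.eval ((x:ℝ) : ℂ)‖ ≤ M} := by
      apply isClosed_le _ continuous_const
      exact (q.continuous_aeval.comp Complex.continuous_ofReal).norm
    exact hclosed.closure_subset_iff.mpr hbd hclosure
  have hmain := lagrange_norm_bound d c hc t hsep htIcc q hq M hM htE w hw
  refine hmain.trans ?_
  -- M * 4^d / (c^d * d!) ≤ M * e * (4e/p)^d
  have hp1 : ((d:ℝ) + 1) ^ (d+1) / ((d+1)! : ℕ) ≤ Real.exp ((d:ℝ)+1) :=
    Real.pow_div_factorial_le_exp (x := (d:ℝ)+1) (by positivity) (d+1)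
  have hfact : ((d+1)! : ℝ) = ((d:ℝ)+1) * (d ! : ℝ) := by
    rw [Nat.factorial_succ]; push_cast; ring
  have hkey : ((d:ℝ) + 1) ^ d / (d ! : ℝ) ≤ Real.exp 1 ^ (d+1) := by
    have h1 : ((d:ℝ) + 1) ^ (d+1) / ((d+1)! : ℝ) = ((d:ℝ)+1)^d / (d ! : ℝ) := by
      rw [hfact, pow_succ]
      have h2 : (0:ℝ) < (d ! : ℝ) := by exact_mod_cast Nat.factorial_pos d
      field_simp
    rw [← h1]
    refine hp1.trans (le_of_eq ?_)
    rw [← Real.exp_nat_mul]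
    congr 1
    push_cast
    ring
  have hcd : c ^ d = p ^ d / ((d:ℝ)+1)^d := by
    rw [hcdef, div_pow]
  have hdpos : (0:ℝ) < (d ! : ℝ) := by exact_mod_cast Nat.factorial_pos d
  have hstep : M * 4^d / (c^d * d !) = M * (4/p)^d * (((d:ℝ)+1)^d / (d ! : ℝ)) := by
    rw [hcd, div_pow]
    field_simp
  rw [hstep]
  have h4p : (0:ℝ) ≤ M * (4/p)^d := by positivity
  calc M * (4/p)^d * (((d:ℝ)+1)^d / (d ! : ℝ)) ≤ M * (4/p)^d * (Real.exp 1 ^ (d+1)) :=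
        mul_le_mul_of_nonneg_left hkey h4p
    _ = M * Real.exp 1 * (4 * Real.exp 1 / p) ^ d := by
        rw [pow_succ]
        rw [div_pow, div_pow, mul_pow]
        have hppos : (0:ℝ) < p ^ d := by positivity
        field_simp




def SepPolyR (n d : ℕ) (f : (Fin n → ℝ) → ℂ) : Prop :=
  ∀ (i : Fin n) (x : Fin n → ℝ), ∃ q : Polynomial ℂ,
    q.natDegree ≤ d ∧ ∀ t : ℝ, q.eval ((t : ℝ) : ℂ) = f (Function.update x i t)

lemma volume_cube (n : ℕ) : volume (Set.univ.pi fun _ : Fin n => Set.Icc (0:ℝ) 1) = 1 := by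
  rw [volume_pi_pi]
  simp [Real.volume_Icc]

lemma cube_bound : ∀ n : ℕ, ∀ p : ℝ, 0 < p → ∃ K C : ℝ, 0 < K ∧ 0 < C ∧
    ∀ d (f : (Fin n → ℝ) → ℂ), SepPolyR n d f →
    ∀ S : Set (Fin n → ℝ), MeasurableSet S → S ⊆ Set.univ.pi (fun _ => Set.Icc (0:ℝ) 1) →
    ENNReal.ofReal p < volume S → (∀ x ∈ S, ‖f x‖ ≤ 1) →
    ∀ x : Fin n → ℝ, (∀ i, x i ∈ Set.Icc (0:ℝ) 1) → ‖f x‖ ≤ K * C ^ d := by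
  intro n
  induction n with
  | zero =>
    intro p hp
    refine ⟨1, 1, one_pos, one_pos, ?_⟩
    intro d f _ S _ _ hSvol hfS x _
    have hSne : S.Nonempty := by
      rw [Set.nonempty_iff_ne_empty]
      intro hcon
      rw [hcon, measure_empty] at hSvol
      simp at hSvol
    obtain ⟨y, hy⟩ := hSne
    have hxy : x = y := funext fun i => i.elim0
    rw [hxy, one_pow, one_mul]
    exact hfS y hy
  | succ n IHn =>
    intro p hp
    obtain ⟨K, C, hK, hC, IH⟩ := IHn (p/2) (by linarith)
    refine ⟨K * Real.exp 1, C * (4 * Real.exp 1 / (p/2)), by positivity, by positivity, ?_⟩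
    intro d f hf S hSm hScube hSvol hfS x hx
    set e := MeasurableEquiv.piFinSuccAbove (fun _ : Fin (n+1) => ℝ) 0 with he
    set T : ℝ → Set (Fin n → ℝ) := fun r => {y | Fin.cons r y ∈ S} with hT
    have hTset : ∀ r : ℝ, Prod.mk r ⁻¹' (e.symm ⁻¹' S) = T r := by
      intro r
      ext y
      have hpt : (e.symm (r, y) : Fin (n+1) → ℝ) = Fin.cons r y := by
        simp only [he, MeasurableEquiv.piFinSuccAbove_symm_apply]
        exact Fin.insertNth_zero' r y
      simp only [Set.mem_preimage, hpt, hT, Set.mem_setOf_eq]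
    have hpre : MeasurableSet (e.symm ⁻¹' S) := e.symm.measurable hSm
    have mp := (volume_preserving_piFinSuccAbove (fun _ : Fin (n+1) => ℝ) 0).symm
    have hvolS : (volume : Measure (ℝ × (Fin n → ℝ))) (e.symm ⁻¹' S) = volume S :=
      mp.measure_preimage hSm.nullMeasurableSet
    have hvolS' : volume S = ∫⁻ r, volume (T r) := by
      rw [← hvolS, MeasureTheory.Measure.volume_eq_prod, MeasureTheory.Measure.prod_apply hpre]
      apply lintegral_congr
      intro r
      rw [hTset r]
    have hTmeas : ∀ r, MeasurableSet (T r) := by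
      intro r
      rw [← hTset r]
      exact measurable_prodMk_left hpre
    have hTcube : ∀ r, T r ⊆ Set.univ.pi (fun _ : Fin n => Set.Icc (0:ℝ) 1) := by
      intro r y hy
      intro i _
      have := hScube hy (i := i.succ) (Set.mem_univ _)
      simpa [Fin.cons_succ] using this
    have hTIcc : ∀ r, (T r).Nonempty → r ∈ Set.Icc (0:ℝ) 1 := by
      intro r ⟨y, hy⟩
      have := hScube hy (i := 0) (Set.mem_univ _)
      simpa [Fin.cons_zero] using this
    have hT1 : ∀ r, volume (T r) ≤ 1 := by
      intro r
      calc volume (T r) ≤ volume (Set.univ.pi fun _ : Fin n => Set.Icc (0:ℝ) 1) :=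
            measure_mono (hTcube r)
        _ = 1 := volume_cube n
    set G : Set ℝ := {r | ENNReal.ofReal (p/2) < volume (T r)} with hG
    have hmeasfun : Measurable (fun r => volume (T r)) := by
      have := measurable_measure_prodMk_left
        (ν := (volume : Measure (Fin n → ℝ))) hpre
      convert this using 1
      funext r
      rw [hTset r]
    have hGmeas : MeasurableSet G := hmeasfun measurableSet_Ioi
    have hGIcc : G ⊆ Set.Icc (0:ℝ) 1 := by
      intro r hr
      apply hTIcc
      rw [Set.nonempty_iff_ne_empty]
      intro hcon
      rw [hG, Set.mem_setOf_eq, hcon, measure_empty] at hr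
      simp at hr
    have hGvol : ENNReal.ofReal (p/2) < volume G := by
      have hbound : ∀ r : ℝ, volume (T r) ≤
          G.indicator (fun _ => 1) r + (Set.Icc (0:ℝ) 1).indicator (fun _ => ENNReal.ofReal (p/2)) r := by
        intro r
        by_cases hrG : r ∈ G
        · rw [Set.indicator_of_mem hrG]
          exact le_add_right (hT1 r)
        · rw [Set.indicator_of_notMem hrG, zero_add]
          have hle : volume (T r) ≤ ENNReal.ofReal (p/2) := by
            rw [hG, Set.mem_setOf_eq, not_lt] at hrG
            exact hrG
          by_cases hrI : r ∈ Set.Icc (0:ℝ) 1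
          · rw [Set.indicator_of_mem hrI]
            exact hle
          · rw [Set.indicator_of_notMem hrI]
            have : T r = ∅ := by
              rw [Set.eq_empty_iff_forall_notMem]
              intro y hy
              exact hrI (hTIcc r ⟨y, hy⟩)
            rw [this]
            simp
      have hint : volume S ≤ volume G + ENNReal.ofReal (p/2) := by
        rw [hvolS']
        calc ∫⁻ r, volume (T r) ≤ ∫⁻ r, (G.indicator (fun _ => 1) r +
              (Set.Icc (0:ℝ) 1).indicator (fun _ => ENNReal.ofReal (p/2)) r) :=
              lintegral_mono hbound
          _ = volume G + ENNReal.ofReal (p/2) := by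
              rw [lintegral_add_left ((measurable_const.indicator hGmeas))]
              rw [lintegral_indicator_const hGmeas, lintegral_indicator_const measurableSet_Icc,
                Real.volume_Icc]
              simp
      have h2 : ENNReal.ofReal p = ENNReal.ofReal (p/2) + ENNReal.ofReal (p/2) := by
        rw [← ENNReal.ofReal_add (by linarith) (by linarith)]
        norm_num
      have h3 : ENNReal.ofReal (p/2) + ENNReal.ofReal (p/2) < volume G + ENNReal.ofReal (p/2) := by
        rw [← h2]
        exact lt_of_lt_of_le hSvol hint
      exact (ENNReal.add_lt_add_iff_right (by simp)).mp h3
    -- step A: interior bound on slices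
    have stepA : ∀ r ∈ G, ∀ y : Fin n → ℝ, (∀ i, y i ∈ Set.Icc (0:ℝ) 1) →
        ‖f (Fin.cons r y)‖ ≤ K * C ^ d := by
      intro r hr y hy
      apply IH d (fun y => f (Fin.cons r y)) ?_ (T r) (hTmeas r) (hTcube r) hr
        (fun z hz => hfS _ hz) y hy
      intro i z
      obtain ⟨q, hq1, hq2⟩ := hf i.succ (Fin.cons r z)
      refine ⟨q, hq1, fun t => ?_⟩
      rw [hq2 t, ← Fin.cons_update]
    -- step B: extend in the first variable via Remez
    have htail : ∀ i : Fin n, Fin.tail x i ∈ Set.Icc (0:ℝ) 1 := fun i => hx i.succ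
    obtain ⟨q, hq1, hq2⟩ := hf 0 x
    have hqval : ∀ t : ℝ, q.eval ((t:ℝ):ℂ) = f (Fin.cons t (Fin.tail x)) := by
      intro t
      rw [hq2 t]
      congr 1
      conv_lhs => rw [← Fin.cons_self_tail x]
      rw [Fin.update_cons_zero]
    have hqG : ∀ r ∈ G, ‖q.eval ((r:ℝ):ℂ)‖ ≤ K * C ^ d := by
      intro r hr
      rw [hqval r]
      exact stepA r hr (Fin.tail x) htail
    have hx0 : ‖((x 0 : ℝ) : ℂ)‖ ≤ 1 := by
      rw [Complex.norm_real, Real.norm_eq_abs, abs_le]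
      exact ⟨by linarith [(hx 0).1], (hx 0).2⟩
    have hrem := remez (p/2) (by linarith) G hGIcc hGvol.le d q hq1 (K * C^d)
      (by positivity) hqG ((x 0 : ℝ) : ℂ) hx0
    have hfx : q.eval ((x 0 : ℝ) : ℂ) = f x := by
      rw [hqval (x 0), Fin.cons_self_tail]
    rw [← hfx]
    refine hrem.trans (le_of_eq ?_)
    rw [mul_pow]
    ring




def SepPolyC (n d : ℕ) (f : (Fin n → ℂ) → ℂ) : Prop :=
  ∀ (i : Fin n) (z : Fin n → ℂ), ∃ q : Polynomial ℂ,
    q.natDegree ≤ d ∧ ∀ t : ℂ, q.eval t = f (Function.update z i t)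

lemma complex_ext (n d : ℕ) (f : (Fin n → ℂ) → ℂ) (hf : SepPolyC n d f) (M : ℝ) (hM : 0 ≤ M)
    (hreal : ∀ x : Fin n → ℝ, (∀ i, x i ∈ Set.Icc (0:ℝ) 1) → ‖f (fun i => ((x i : ℝ) : ℂ))‖ ≤ M) :
    ∀ z : Fin n → ℂ, (∀ i, ‖z i‖ ≤ 1) →
      ‖f z‖ ≤ M * (Real.exp 1 * (4 * Real.exp 1) ^ d) ^ n := by
  set A : ℝ := Real.exp 1 * (4 * Real.exp 1) ^ d with hA
  have hApos : 0 < A := by positivity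
  have claim : ∀ k : ℕ, k ≤ n → ∀ z : Fin n → ℂ,
      (∀ i : Fin n, (i:ℕ) < k → ‖z i‖ ≤ 1) →
      (∀ i : Fin n, k ≤ (i:ℕ) → ∃ x : ℝ, x ∈ Set.Icc (0:ℝ) 1 ∧ z i = ((x:ℝ):ℂ)) →
      ‖f z‖ ≤ M * A ^ k := by
    intro k
    induction k with
    | zero =>
      intro _ z _ hz2
      choose x hx1 hx2 using fun i => hz2 i (Nat.zero_le _)
      have hzeq : z = fun i => ((x i : ℝ) : ℂ) := funext fun i => hx2 i
      rw [hzeq, pow_zero, mul_one]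
      exact hreal x hx1
    | succ k IHk =>
      intro hk z hz1 hz2
      set i0 : Fin n := ⟨k, by omega⟩ with hi0
      obtain ⟨q, hq1, hq2⟩ := hf i0 z
      have hqbd : ∀ r ∈ Set.Icc (0:ℝ) 1, ‖q.eval ((r:ℝ):ℂ)‖ ≤ M * A ^ k := by
        intro r hr
        rw [hq2]
        apply IHk (by omega)
        · intro i hi
          rcases eq_or_ne i i0 with rfl | hne
          · rw [Function.update_self]
            rw [Complex.norm_real, Real.norm_eq_abs, abs_le]
            exact ⟨by linarith [hr.1], hr.2⟩
          · rw [Function.update_of_ne hne]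
            exact hz1 i (by omega)
        · intro i hi
          rcases eq_or_ne i i0 with rfl | hne
          · exact ⟨r, hr, by rw [Function.update_self]⟩
          · rw [Function.update_of_ne hne]
            apply hz2
            have hik : (i:ℕ) ≠ k := by
              intro hcon
              apply hne
              apply Fin.ext
              rw [hcon]
            omega
      have hvolIcc : ENNReal.ofReal 1 ≤ volume (Set.Icc (0:ℝ) 1) := by
        rw [Real.volume_Icc]
        norm_num
      have hrem := remez 1 one_pos (Set.Icc 0 1) le_rfl hvolIcc d q hq1 (M * A ^ k)
        (by positivity) hqbd (z i0) (hz1 i0 (by show (i0:ℕ) < k + 1; rw [show (i0:ℕ) = k from rfl]; omega))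
      have : q.eval (z i0) = f z := by
        rw [hq2 (z i0), Function.update_eq_self]
      rw [← this]
      refine hrem.trans (le_of_eq ?_)
      rw [pow_succ, hA]
      rw [div_one]
      ring
  intro z hz
  exact claim n le_rfl z (fun i _ => hz i) (fun i hi => absurd i.isLt (by omega))

-- MvPolynomial glue
lemma natDegree_aeval_le (n : ℕ) (h : MvPolynomial (Fin n) ℂ) (s : Fin n → Polynomial ℂ)
    (hs : ∀ j, (s j).natDegree ≤ 1) :
    (MvPolynomial.aeval s h).natDegree ≤ h.totalDegree := by
  rw [MvPolynomial.aeval_def, MvPolynomial.eval₂_eq]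
  apply Polynomial.natDegree_sum_le_of_forall_le
  intro α hα
  calc (algebraMap ℂ (Polynomial ℂ) (h.coeff α) * ∏ i ∈ α.support, s i ^ α i).natDegree
      ≤ (algebraMap ℂ (Polynomial ℂ) (h.coeff α)).natDegree +
        (∏ i ∈ α.support, s i ^ α i).natDegree := Polynomial.natDegree_mul_le
    _ ≤ 0 + ∑ i ∈ α.support, (s i ^ α i).natDegree := by
        apply _root_.add_le_add
        · exact le_of_eq (Polynomial.natDegree_C _)
        · exact Polynomial.natDegree_prod_le _ _
    _ ≤ ∑ i ∈ α.support, α i := by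
        rw [zero_add]
        apply Finset.sum_le_sum
        intro i _
        calc (s i ^ α i).natDegree ≤ α i * (s i).natDegree := Polynomial.natDegree_pow_le
          _ ≤ α i * 1 := Nat.mul_le_mul_left _ (hs i)
          _ = α i := Nat.mul_one _
    _ ≤ h.totalDegree := MvPolynomial.le_totalDegree hα

lemma eval_update_poly (n : ℕ) (h : MvPolynomial (Fin n) ℂ) (i : Fin n) (z : Fin n → ℂ) :
    ∃ q : Polynomial ℂ, q.natDegree ≤ h.totalDegree ∧
      ∀ t : ℂ, q.eval t = MvPolynomial.eval (Function.update z i t) h := by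
  classical
  set s : Fin n → Polynomial ℂ := fun j => if j = i then Polynomial.X else Polynomial.C (z j)
    with hs
  refine ⟨MvPolynomial.aeval s h, natDegree_aeval_le n h s ?_, ?_⟩
  · intro j
    rw [hs]
    by_cases hj : j = i <;> simp [hj]
  · intro t
    have hcomp : Polynomial.eval t (MvPolynomial.aeval s h) =
        (Polynomial.evalRingHom t) (MvPolynomial.eval₂ (algebraMap ℂ (Polynomial ℂ)) s h) := by
      rw [MvPolynomial.aeval_def, Polynomial.coe_evalRingHom]
    rw [hcomp, MvPolynomial.eval₂_comp_left]
    have h1 : (Polynomial.evalRingHom t).comp (algebraMap ℂ (Polynomial ℂ)) = RingHom.id ℂ := by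
      ext c
      simp
    have h2 : ((Polynomial.evalRingHom t) ∘ s) = Function.update z i t := by
      funext j
      rw [Function.update_apply, hs]
      by_cases hj : j = i <;> simp [hj]
    rw [h1, h2]
    rfl

lemma eval_smul_homog {n d : ℕ} {h : MvPolynomial (Fin n) ℂ} (hh : h.IsHomogeneous d)
    (c : ℂ) (z : Fin n → ℂ) :
    MvPolynomial.eval (fun i => c * z i) h = c ^ d * MvPolynomial.eval z h := by
  rw [MvPolynomial.eval_eq, MvPolynomial.eval_eq, Finset.mul_sum]
  apply Finset.sum_congr rfl
  intro α hα
  have hcoeff : h.coeff α ≠ 0 := MvPolynomial.mem_support_iff.mp hα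
  have hw : (Finsupp.weight 1) α = d := hh hcoeff
  have hdeg : ∑ i ∈ α.support, α i = d := by
    have h1 : Finsupp.degree α = d := by
      rw [Finsupp.degree_eq_weight_one]
      exact hw
    rw [← h1]
    rfl
  have hprod : ∏ i ∈ α.support, (c * z i) ^ α i
      = c ^ d * ∏ i ∈ α.support, z i ^ α i := by
    rw [← hdeg, ← Finset.prod_pow_eq_pow_sum]
    rw [← Finset.prod_mul_distrib]
    apply Finset.prod_congr rfl
    intro i _
    rw [mul_pow]
  rw [hprod]
  ring













end PascoeAux

/-- **Quantitative bound for homogeneous polynomials bounded on a set of positive measure**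
(Lemma 2.3 of Pascoe's wedge-of-the-edge theorem). For every `n` and `p > 0` there are
constants `C, K > 0` such that every homogeneous polynomial `h` of degree `d` in `n` variables
that is bounded by `1` on a measurable subset `S ⊆ [0,1]^n` of Lebesgue measure greater than `p`
satisfies `|h(z)| ≤ K C^d ‖z‖_∞^d` on all of `ℂ^n`. -/
theorem homogeneous_poly_bound_of_bounded_on_positive_measure (n : ℕ) (p : ℝ) (hp : 0 < p) :
    ∃ C K : ℝ, 0 < C ∧ 0 < K ∧
      ∀ (S : Set (Fin n → ℝ)), MeasurableSet S →
        S ⊆ Set.univ.pi (fun _ => Set.Icc (0 : ℝ) 1) →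
        ENNReal.ofReal p < volume S →
        ∀ (d : ℕ) (h : MvPolynomial (Fin n) ℂ), h.IsHomogeneous d →
          (∀ x ∈ S, ‖MvPolynomial.eval (fun i => (x i : ℂ)) h‖ ≤ 1) →
          ∀ z : Fin n → ℂ, ‖MvPolynomial.eval z h‖ ≤ K * C ^ d * ‖z‖ ^ d := by
  obtain ⟨K, C, hK, hC, hKC⟩ := cube_bound n p hp
  refine ⟨C * (4 * Real.exp 1) ^ n, K * Real.exp 1 ^ n, by positivity, by positivity, ?_⟩
  intro S hSm hScube hSvol d h hhom hbd z
  have hdeg : h.totalDegree ≤ d := hhom.totalDegree_le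
  -- real cube bound
  have hsepR : SepPolyR n d (fun x => MvPolynomial.eval (fun i => ((x i : ℝ) : ℂ)) h) := by
    intro i x
    obtain ⟨q, hq1, hq2⟩ := eval_update_poly n h i (fun j => ((x j : ℝ) : ℂ))
    refine ⟨q, hq1.trans hdeg, fun t => ?_⟩
    rw [hq2 ((t:ℝ):ℂ)]
    have harg : Function.update (fun j => ((x j : ℝ):ℂ)) i ((t:ℝ):ℂ)
        = fun j => ((Function.update x i t j : ℝ) : ℂ) := by
      funext j
      rw [Function.update_apply, Function.update_apply]
      by_cases hj : j = i <;> simp [hj]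
    rw [harg]
  have hcube : ∀ x : Fin n → ℝ, (∀ i, x i ∈ Set.Icc (0:ℝ) 1) →
      ‖MvPolynomial.eval (fun i => ((x i : ℝ) : ℂ)) h‖ ≤ K * C ^ d :=
    hKC d _ hsepR S hSm hScube hSvol hbd
  -- complex unit polydisc bound
  have hsepC : SepPolyC n d (fun z => MvPolynomial.eval z h) := by
    intro i z'
    obtain ⟨q, hq1, hq2⟩ := eval_update_poly n h i z'
    exact ⟨q, hq1.trans hdeg, hq2⟩
  have hunit : ∀ z' : Fin n → ℂ, (∀ i, ‖z' i‖ ≤ 1) →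
      ‖MvPolynomial.eval z' h‖ ≤ (K * C ^ d) * (Real.exp 1 * (4 * Real.exp 1) ^ d) ^ n :=
    complex_ext n d _ hsepC (K * C ^ d) (by positivity) (fun x hx => hcube x hx)
  have halg : (K * C ^ d) * (Real.exp 1 * (4 * Real.exp 1) ^ d) ^ n =
      (K * Real.exp 1 ^ n) * (C * (4 * Real.exp 1) ^ n) ^ d := by
    rw [mul_pow (Real.exp 1) ((4*Real.exp 1)^d) n, mul_pow C ((4*Real.exp 1)^n) d,
      ← pow_mul (4*Real.exp 1) d n, ← pow_mul (4*Real.exp 1) n d, mul_comm d n]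
    ring
  rcases eq_or_ne ‖z‖ 0 with hz0 | hz0
  · have hz : z = 0 := norm_eq_zero.mp hz0
    subst hz
    rcases Nat.eq_zero_or_pos d with rfl | hd
    · have h0 := hunit 0 (fun i => by simp)
      simpa using h0
    · have hc0 : MvPolynomial.eval (0 : Fin n → ℂ) h = 0 := by
        have h1 : MvPolynomial.coeff 0 h = 0 := by
          apply hhom.coeff_eq_zero
          have h2 : Finsupp.degree (0 : Fin n →₀ ℕ) = 0 := by simp [Finsupp.degree]
          omega
        simp [MvPolynomial.eval_zero, MvPolynomial.constantCoeff_eq, h1]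
      rw [hc0, norm_zero, hz0, zero_pow (by omega), mul_zero]
  · have hr : 0 < ‖z‖ := lt_of_le_of_ne (norm_nonneg z) (Ne.symm hz0)
    set u : Fin n → ℂ := fun i => ((‖z‖⁻¹ : ℝ) : ℂ) * z i with hu
    have hzu : (fun i => ((‖z‖ : ℝ) : ℂ) * u i) = z := by
      funext i
      rw [hu]
      rw [← mul_assoc, ← Complex.ofReal_mul, mul_inv_cancel₀ hz0]
      simp
    have hscale : MvPolynomial.eval z h = ((‖z‖ : ℝ) : ℂ) ^ d * MvPolynomial.eval u h := by
      have hs := eval_smul_homog hhom ((‖z‖ : ℝ) : ℂ) u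
      rw [hzu] at hs
      exact hs
    have huu : ∀ i, ‖u i‖ ≤ 1 := by
      intro i
      rw [hu]
      rw [norm_mul, Complex.norm_real, Real.norm_eq_abs, abs_of_pos (by positivity)]
      calc ‖z‖⁻¹ * ‖z i‖ ≤ ‖z‖⁻¹ * ‖z‖ :=
            mul_le_mul_of_nonneg_left (norm_le_pi_norm z i) (by positivity)
        _ = 1 := inv_mul_cancel₀ hz0
    rw [hscale, norm_mul, norm_pow, Complex.norm_real, Real.norm_eq_abs, abs_of_pos hr]
    calc ‖z‖ ^ d * ‖MvPolynomial.eval u h‖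
        ≤ ‖z‖ ^ d * ((K * C ^ d) * (Real.exp 1 * (4 * Real.exp 1) ^ d) ^ n) := by
          apply mul_le_mul_of_nonneg_left (hunit u huu) (by positivity)
      _ = (K * Real.exp 1 ^ n) * (C * (4 * Real.exp 1) ^ n) ^ d * ‖z‖ ^ d := by
          rw [halg]; ring
end

section
/- Let μ be a finite Borel measure on [−1,1], let a ∈ ℝ, and define f(x) = a + ∫_{[−1,1]} x/(1 + t x) dμ(t) for x ∈ (−1,1). If there is M > 0 with |f(x)| ≤ M for all x ∈ (−1,1), then μ([−1,1]) ≤ M. -/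
open MeasureTheory

/-- If `f(x) = a + ∫_{[−1,1]} x/(1+tx) dμ(t)` is bounded by `M` on `(−1,1)`, then the total
mass of `μ` is at most `M`. -/
theorem nevanlinna_integral_mass_bound (μ : Measure ℝ) [IsFiniteMeasure μ] (a : ℝ)
    (f : ℝ → ℝ) (hf : ∀ x ∈ Set.Ioo (-1 : ℝ) 1,
      f x = a + ∫ t in Set.Icc (-1 : ℝ) 1, x / (1 + t * x) ∂μ)
    (M : ℝ) (hM : 0 < M) (hbd : ∀ x ∈ Set.Ioo (-1 : ℝ) 1, |f x| ≤ M) :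
    (μ (Set.Icc (-1 : ℝ) 1)).toReal ≤ M := by
  set m := (μ (Set.Icc (-1 : ℝ) 1)).toReal with hm
  have hm0 : 0 ≤ m := ENNReal.toReal_nonneg
  have key : ∀ x : ℝ, 0 < x → x < 1 → x * m ≤ M := by
    intro x hx0 hx1
    have hxI : x ∈ Set.Ioo (-1:ℝ) 1 := ⟨by linarith, hx1⟩
    have hxI' : -x ∈ Set.Ioo (-1:ℝ) 1 := ⟨by linarith, by linarith⟩
    have hden : ∀ t ∈ Set.Icc (-1:ℝ) 1, 0 < 1 + t * x := by
      intro t ht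
      nlinarith [ht.1, ht.2, mul_nonneg (by linarith [ht.1] : (0:ℝ) ≤ t + 1) hx0.le]
    have hden' : ∀ t ∈ Set.Icc (-1:ℝ) 1, 0 < 1 - t * x := by
      intro t ht
      nlinarith [ht.1, ht.2, mul_nonneg (by linarith [ht.2] : (0:ℝ) ≤ 1 - t) hx0.le]
    have hint1 : IntegrableOn (fun t => x / (1 + t * x)) (Set.Icc (-1:ℝ) 1) μ := by
      apply ContinuousOn.integrableOn_compact isCompact_Icc
      exact continuousOn_const.div (by fun_prop) (fun t ht => (hden t ht).ne')
    have hint2 : IntegrableOn (fun t => x / (1 - t * x)) (Set.Icc (-1:ℝ) 1) μ := by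
      apply ContinuousOn.integrableOn_compact isCompact_Icc
      exact continuousOn_const.div (by fun_prop) (fun t ht => (hden' t ht).ne')
    have hsum : (2 : ℝ) * x * m ≤
        ∫ t in Set.Icc (-1:ℝ) 1, (x / (1 + t * x) + x / (1 - t * x)) ∂μ := by
      have hconst : ∫ _t in Set.Icc (-1:ℝ) 1, (2 * x) ∂μ = 2 * x * m := by
        simp [hm, mul_comm, Measure.real]
      rw [← hconst]
      apply setIntegral_mono_on (integrableOn_const (measure_lt_top _ _).ne)
        (hint1.add hint2) measurableSet_Icc
      intro t ht
      simp only [Pi.add_apply]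
      have h1 := hden t ht
      have h2 := hden' t ht
      rw [div_add_div _ _ h1.ne' h2.ne', le_div_iff₀ (by positivity)]
      nlinarith [sq_nonneg (t * x), hx0.le, mul_nonneg hx0.le (sq_nonneg (t * x))]
    have hdiff : f x - f (-x) =
        ∫ t in Set.Icc (-1:ℝ) 1, (x / (1 + t * x) + x / (1 - t * x)) ∂μ := by
      rw [hf x hxI, hf (-x) hxI']
      have hneg : (∫ t in Set.Icc (-1:ℝ) 1, (-x) / (1 + t * (-x)) ∂μ)
          = - ∫ t in Set.Icc (-1:ℝ) 1, x / (1 - t * x) ∂μ := by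
        rw [← integral_neg]
        congr 1 with t
        ring_nf
      rw [hneg, integral_add hint1 hint2]
      ring
    have h1 := abs_le.1 (hbd x hxI)
    have h2 := abs_le.1 (hbd (-x) hxI')
    linarith [hsum.trans_eq hdiff.symm, h1.2, h2.1]
  by_contra hc
  push_neg at hc
  have hmpos : 0 < m := lt_trans hM hc
  set x := (M / m + 1) / 2 with hxdef
  have hx0 : 0 < x := by positivity
  have hx1 : x < 1 := by
    have : M / m < 1 := (div_lt_one hmpos).2 hc
    rw [hxdef]; linarith
  have hkey := key x hx0 hx1
  have hxm : x * m = (M + m) / 2 := by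
    rw [hxdef]; field_simp
  nlinarith
end

section
/- Let μ be a finite Borel measure on [−1,1], let a, b ∈ ℝ, and define f(x) = a + b x + ∫_{[−1,1]} x²/(1 + t x) dμ(t) for x ∈ (−1,1). If there is M > 0 with |f(x)| ≤ M for all x ∈ (−1,1), then μ([−1,1]) ≤ 2M and |b| ≤ 6M. -/
open MeasureTheory

lemma kraus_aux_pos {x t : ℝ} (hx : x ∈ Set.Ioo (-1 : ℝ) 1)
    (ht : t ∈ Set.Icc (-1 : ℝ) 1) : (0 : ℝ) < 1 + t * x := by
  have h1 : |t| ≤ 1 := abs_le.mpr ⟨ht.1, ht.2⟩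
  have h2 : |x| < 1 := abs_lt.mpr ⟨hx.1, hx.2⟩
  have h3 : |t * x| < 1 := by
    rw [abs_mul]
    nlinarith [abs_nonneg x, abs_nonneg t]
  have := neg_abs_le (t * x)
  linarith

lemma kraus_aux_int (μ : Measure ℝ) [IsFiniteMeasure μ] {x : ℝ}
    (hx : x ∈ Set.Ioo (-1 : ℝ) 1) :
    IntegrableOn (fun t => x ^ 2 / (1 + t * x)) (Set.Icc (-1 : ℝ) 1) μ := by
  apply ContinuousOn.integrableOn_compact isCompact_Icc
  apply ContinuousOn.div continuousOn_const
  · exact (continuous_const.add (continuous_id.mul continuous_const)).continuousOn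
  · intro t ht
    exact ne_of_gt (kraus_aux_pos hx ht)

/-- If `f(x) = a + bx + ∫_{[−1,1]} x²/(1+tx) dμ(t)` is bounded by `M` on `(−1,1)`, then the
total mass of `μ` is at most `2M` and `|b| ≤ 6M`. -/
theorem kraus_integral_mass_and_linear_bound (μ : Measure ℝ) [IsFiniteMeasure μ] (a b : ℝ)
    (f : ℝ → ℝ) (hf : ∀ x ∈ Set.Ioo (-1 : ℝ) 1,
      f x = a + b * x + ∫ t in Set.Icc (-1 : ℝ) 1, x ^ 2 / (1 + t * x) ∂μ)
    (M : ℝ) (hM : 0 < M) (hbd : ∀ x ∈ Set.Ioo (-1 : ℝ) 1, |f x| ≤ M) :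
    (μ (Set.Icc (-1 : ℝ) 1)).toReal ≤ 2 * M ∧ |b| ≤ 6 * M := by
  have h0 : (0:ℝ) ∈ Set.Ioo (-1 : ℝ) 1 := by norm_num
  have ha : f 0 = a := by
    have := hf 0 h0
    simpa using this
  have haM : |a| ≤ M := ha ▸ hbd 0 h0
  have hfin : μ (Set.Icc (-1 : ℝ) 1) < ⊤ := measure_lt_top μ _
  -- key inequality
  have key : ∀ x ∈ Set.Ioo (-1 : ℝ) 1, 2 * x ^ 2 * (μ (Set.Icc (-1:ℝ) 1)).toReal ≤ 4 * M := by
    intro x hx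
    have hx' : -x ∈ Set.Ioo (-1 : ℝ) 1 := by
      constructor <;> [linarith [hx.2]; linarith [hx.1]]
    have i1 := kraus_aux_int μ hx
    have i2 := kraus_aux_int μ hx'
    have e1 := hf x hx
    have e2 := hf (-x) hx'
    have hmono : ∀ t ∈ Set.Icc (-1:ℝ) 1,
        2 * x ^ 2 ≤ x ^ 2 / (1 + t * x) + (-x) ^ 2 / (1 + t * (-x)) := by
      intro t ht
      have p1 := kraus_aux_pos hx ht
      have p2 := kraus_aux_pos hx' ht
      have p2' : (0:ℝ) < 1 - t * x := by linarith [p2, (by ring : t * -x = -(t*x))]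
      have e : x ^ 2 / (1 + t * x) + (-x) ^ 2 / (1 + t * (-x))
          = 2 * x ^ 2 / ((1 + t * x) * (1 - t * x)) := by
        rw [div_add_div _ _ (ne_of_gt p1) (by rw [show t * -x = -(t*x) by ring]; linarith)]
        rw [show (1 + t * (-x)) = 1 - t * x by ring]
        congr 1
        ring
      rw [e]
      have hden : (0:ℝ) < (1 + t * x) * (1 - t * x) := mul_pos p1 p2'
      rw [le_div_iff₀ hden]
      nlinarith [sq_nonneg x, sq_nonneg (t*x), mul_self_nonneg x]
    have hle : 2 * x ^ 2 * (μ (Set.Icc (-1:ℝ) 1)).toReal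
        ≤ ∫ t in Set.Icc (-1:ℝ) 1,
            (x ^ 2 / (1 + t * x) + (-x) ^ 2 / (1 + t * (-x))) ∂μ := by
      have h := setIntegral_mono_on (integrableOn_const hfin.ne)
        (i1.add i2) measurableSet_Icc hmono
      rwa [setIntegral_const, smul_eq_mul, mul_comm, measureReal_def] at h
    rw [integral_add i1 i2] at hle
    have b1 := abs_le.mp (hbd x hx)
    have b2 := abs_le.mp (hbd (-x) hx')
    have ba := abs_le.mp haM
    have hbx : b * -x = -(b * x) := by ring
    nlinarith [hle, e1, e2]
  have hmass : (μ (Set.Icc (-1:ℝ) 1)).toReal ≤ 2 * M := by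
    set m := (μ (Set.Icc (-1:ℝ) 1)).toReal with hm
    have hten : Filter.Tendsto (fun x : ℝ => 2 * x ^ 2 * m)
        (nhdsWithin 1 (Set.Iio 1)) (nhds (2 * 1 ^ 2 * m)) :=
      ((continuous_const.mul (continuous_pow 2)).mul continuous_const).continuousAt.tendsto.mono_left
        nhdsWithin_le_nhds
    have hev : ∀ᶠ x in nhdsWithin 1 (Set.Iio 1), 2 * x ^ 2 * m ≤ 4 * M := by
      filter_upwards [Ioo_mem_nhdsLT_of_mem (by norm_num : (1:ℝ) ∈ Set.Ioc (-1) 1)] with x hx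
      exact key x hx
    have := le_of_tendsto hten hev
    norm_num at this
    linarith
  refine ⟨hmass, ?_⟩
  -- bound on b using x = ±1/2
  have hh : (1/2 : ℝ) ∈ Set.Ioo (-1:ℝ) 1 := by norm_num
  have hh' : (-(1/2) : ℝ) ∈ Set.Ioo (-1:ℝ) 1 := by norm_num
  have e1 := hf (1/2) hh
  have e2 := hf (-(1/2)) hh'
  have n1 : |∫ t in Set.Icc (-1:ℝ) 1, (1/2:ℝ) ^ 2 / (1 + t * (1/2)) ∂μ|
      ≤ (1/2) * (μ (Set.Icc (-1:ℝ) 1)).toReal := by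
    have h := norm_setIntegral_le_of_norm_le_const (C := 1/2)
      (f := fun t => (1/2:ℝ) ^ 2 / (1 + t * (1/2))) hfin
      (fun t (ht : t ∈ Set.Icc (-1:ℝ) 1) => by
        have hp := kraus_aux_pos hh ht
        rw [Real.norm_eq_abs, abs_of_nonneg (by positivity)]
        rw [div_le_iff₀ hp]
        nlinarith [ht.1])
    simpa only [Real.norm_eq_abs, measureReal_def] using h
  have n2 : |∫ t in Set.Icc (-1:ℝ) 1, (-(1/2):ℝ) ^ 2 / (1 + t * (-(1/2))) ∂μ|
      ≤ (1/2) * (μ (Set.Icc (-1:ℝ) 1)).toReal := by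
    have h := norm_setIntegral_le_of_norm_le_const (C := 1/2)
      (f := fun t => (-(1/2):ℝ) ^ 2 / (1 + t * (-(1/2)))) hfin
      (fun t (ht : t ∈ Set.Icc (-1:ℝ) 1) => by
        have hp := kraus_aux_pos hh' ht
        rw [Real.norm_eq_abs, abs_of_nonneg (by positivity)]
        rw [div_le_iff₀ hp]
        nlinarith [ht.2])
    simpa only [Real.norm_eq_abs, measureReal_def] using h
  have b1 := abs_le.mp (hbd (1/2) hh)
  have b2 := abs_le.mp (hbd (-(1/2)) hh')
  have a1 := abs_le.mp n1
  have a2 := abs_le.mp n2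
  rw [abs_le]
  constructor <;> nlinarith [hmass, e1, e2]
end
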